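/- Let l, T ∈ ℕ and let φ : ℤ^l → ℤ^l be a permutation with ‖φ(x) − x‖ ≤ T for all x ∈ ℤ^l. Let Q̂ := (−1/4, …, −1/4) + [−T, 2T]^l ⊆ ℝ^l. Then there exist permutations σ₁, …, σ_{3^l} of the half-integer lattice (1/2)ℤ^l such that: (i) for each k ∈ {1,…,3^l} there is p_k ∈ {−1,0,1}^l such that for every z ∈ ℤ^l, σ_k restricts to a permutation of (1/2)ℤ^l ∩ (Q̂ + T(3z + p_k)); and (ii) φ equals the restriction to ℤ^l of the composition σ_{3^l} ∘ σ_{3^l − 1} ∘ ⋯ ∘ σ₁. -/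

import Mathlib

/-- The integer lattice `ℤ^l` inside `ℝ^l`. -/
def intLattice (l : ℕ) : Set (EuclideanSpace ℝ (Fin l)) :=
  {x | ∀ i, ∃ z : ℤ, x i = z}

/-- The half-integer lattice `(1/2)ℤ^l` inside `ℝ^l`. -/
def halfLattice (l : ℕ) : Set (EuclideanSpace ℝ (Fin l)) :=
  {x | ∀ i, ∃ z : ℤ, x i = z / 2}

/-- The tile `Q̂ + T(3z + p)` where `Q̂ = (−1/4,…,−1/4) + [−T,2T]^l`. -/
def tile (l T : ℕ) (z : Fin l → ℤ) (p : Fin l → ℝ) : Set (EuclideanSpace ℝ (Fin l)) :=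
  {x | ∀ i, -(1/4 : ℝ) - T + T * (3 * z i + p i) ≤ x i ∧
        x i ≤ -(1/4 : ℝ) + 2 * T + T * (3 * z i + p i)}

namespace Stmt10

open Set Function

/-! ### Integer division helpers -/

lemma ediv_bounds (a d : ℤ) (hd : 0 < d) : d * (a / d) ≤ a ∧ a < d * (a / d + 1) := by
  have h1 := Int.mul_ediv_add_emod a d
  have h2 := Int.emod_nonneg a (ne_of_gt hd)
  have h3 := Int.emod_lt_of_pos a hd
  constructor <;> nlinarith

lemma ediv_unique {a d z : ℤ} (hd : 0 < d) (h1 : d * z ≤ a) (h2 : a < d * (z + 1)) :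
    a / d = z := by
  obtain ⟨b1, b2⟩ := ediv_bounds a d hd
  have hz1 : z < a / d + 1 := by
    by_contra h
    push_neg at h
    nlinarith
  have hz2 : a / d < z + 1 := by
    by_contra h
    push_neg at h
    nlinarith
  omega

/-! ### Cube index -/

/-- index of the base cube `[3Tc - T, 3Tc + 2T - 1]` containing `n`. -/
def cc (T n : ℤ) : ℤ := (n + T) / (3 * T)

lemma cc_bounds (T : ℤ) (hT : 1 ≤ T) (n : ℤ) :
    3 * T * cc T n - T ≤ n ∧ n ≤ 3 * T * cc T n + 2 * T - 1 := by
  obtain ⟨b1, b2⟩ := ediv_bounds (n + T) (3 * T) (by linarith)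
  unfold cc
  constructor <;> nlinarith

lemma cc_unique {T : ℤ} (hT : 1 ≤ T) {n z : ℤ}
    (h1 : 3 * T * z - T ≤ n) (h2 : n ≤ 3 * T * z + 2 * T - 1) : cc T n = z := by
  exact ediv_unique (by linarith) (by nlinarith) (by nlinarith)

variable {l : ℕ}

/-- even (integer) lattice point, in half-coordinates -/
def ev (b : Fin l → ℤ) : Fin l → ℤ := fun i => 2 * b i

/-- odd ("parked") lattice point, in half-coordinates -/
def od (b : Fin l → ℤ) : Fin l → ℤ := fun i => 2 * b i + 1

lemma ev_inj : Function.Injective (ev (l := l)) := by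
  intro a b h
  funext i
  have := congrFun h i
  simp only [ev] at this
  omega

lemma od_inj : Function.Injective (od (l := l)) := by
  intro a b h
  funext i
  have := congrFun h i
  simp only [od] at this
  omega

lemma ev_ne_od (hl : 0 < l) (a b : Fin l → ℤ) : ev a ≠ od b := by
  intro h
  have := congrFun h ⟨0, hl⟩
  simp only [ev, od] at this
  omega

/-- the tile index of a half-coordinate point `a` (representing `a/2`) in the
tiling with offset `q`. -/
def tq (T : ℤ) (q a : Fin l → ℤ) : Fin l → ℤ := fun i => (a i + 2 * T - 2 * T * q i) / (6 * T)

lemma tq_apply_eq_iff {T : ℤ} (hT : 1 ≤ T) {q a : Fin l → ℤ} {i : Fin l} {w : ℤ} :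
    tq T q a i = w ↔
      6 * T * w + 2 * T * q i - 2 * T ≤ a i ∧ a i ≤ 6 * T * w + 2 * T * q i + 4 * T - 1 := by
  constructor
  · intro h
    obtain ⟨b1, b2⟩ := ediv_bounds (a i + 2 * T - 2 * T * q i) (6 * T) (by linarith)
    unfold tq at h
    rw [h] at b1 b2
    constructor <;> nlinarith
  · rintro ⟨h1, h2⟩
    exact ediv_unique (by linarith) (by nlinarith) (by nlinarith)

lemma tq_ev {T : ℤ} (hT : 1 ≤ T) (b : Fin l → ℤ) (i : Fin l) :
    tq T 0 (ev b) i = cc T (b i) := by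
  obtain ⟨c1, c2⟩ := cc_bounds T hT (b i)
  rw [tq_apply_eq_iff hT]
  simp only [Pi.zero_apply, mul_zero, ev]
  constructor <;> nlinarith

lemma tq_od {T : ℤ} (hT : 1 ≤ T) (b : Fin l → ℤ) (i : Fin l) :
    tq T 0 (od b) i = cc T (b i) := by
  obtain ⟨c1, c2⟩ := cc_bounds T hT (b i)
  rw [tq_apply_eq_iff hT]
  simp only [Pi.zero_apply, mul_zero, od]
  constructor <;> nlinarith

set_option maxHeartbeats 1000000 in
/-- The key one-dimensional estimate: if `w` is within `T` of `b` and sits `q` cubes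
further, then whenever `2b` lies in a `q`-offset tile interval, so does `2w+1`. -/
lemma coord_key {T : ℤ} (hT : 1 ≤ T) {q b w z : ℤ}
    (hq : q = -1 ∨ q = 0 ∨ q = 1) (hd : |w - b| ≤ T) (hcw : cc T w = cc T b + q)
    (h1 : 6 * T * z + 2 * T * q - 2 * T ≤ 2 * b)
    (h2 : 2 * b ≤ 6 * T * z + 2 * T * q + 4 * T - 1) :
    6 * T * z + 2 * T * q - 2 * T ≤ 2 * w + 1 ∧
      2 * w + 1 ≤ 6 * T * z + 2 * T * q + 4 * T - 1 := by
  obtain ⟨b1, b2⟩ := cc_bounds T hT b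
  obtain ⟨w1, w2⟩ := cc_bounds T hT w
  rw [hcw] at w1 w2
  have habs := abs_le.1 hd
  have h3T : (0:ℤ) < 3 * T := by linarith
  have mono : ∀ u v : ℤ, u ≤ v → 3*T*u ≤ 3*T*v := fun u v h =>
    mul_le_mul_of_nonneg_left h (by linarith)
  have hqT : T * q ≤ T ∧ -T ≤ T * q := by
    rcases hq with rfl | rfl | rfl <;> constructor <;> linarith
  have h2' : b ≤ 3*T*z + T*q + 2*T - 1 := by
    have hlt : 2*b < 6*T*z + 2*T*q + 4*T := by linarith
    have hlt2 : b < 3*T*z + T*q + 2*T := by linarith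
    linarith [Int.lt_iff_add_one_le.mp hlt2]
  have h1' : 3*T*z + T*q - T ≤ b := by linarith
  generalize hmdef : cc T b = m at b1 b2 w1 w2
  have hub : m ≤ z + 1 := by
    by_contra hcon
    push_neg at hcon
    have := mono (z+2) m (by omega)
    linarith
  have hlb : z - 1 ≤ m := by
    by_contra hcon
    push_neg at hcon
    have := mono m (z-2) (by omega)
    linarith
  have hm : m = z - 1 ∨ m = z ∨ m = z + 1 := by omega
  rcases hq with rfl | rfl | rfl <;> rcases hm with rfl | rfl | rfl <;>
    first
      | (exfalso; linarith)
      | (constructor <;> linarith)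

variable (T : ℤ) (ψ : (Fin l → ℤ) → (Fin l → ℤ))

/-- cube displacement vector of `b` under `ψ`. -/
def dd (b : Fin l → ℤ) : Fin l → ℤ := fun i => cc T (ψ b i) - cc T (b i)

lemma dd_mem {T : ℤ} {ψ : (Fin l → ℤ) → (Fin l → ℤ)} (hT : 1 ≤ T)
    (hdisp : ∀ b i, |ψ b i - b i| ≤ T) (b : Fin l → ℤ) (i : Fin l) :
    dd T ψ b i = -1 ∨ dd T ψ b i = 0 ∨ dd T ψ b i = 1 := by
  obtain ⟨c1, c2⟩ := cc_bounds T hT (b i)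
  obtain ⟨d1, d2⟩ := cc_bounds T hT (ψ b i)
  have hd := abs_le.1 (hdisp b i)
  unfold dd
  set m := cc T (b i)
  set m' := cc T (ψ b i)
  have h1 : m' ≤ m + 1 := by nlinarith
  have h2 : m - 1 ≤ m' := by nlinarith
  omega

open Classical in
/-- The parking stage for offset `q`: swaps `2b ↔ 2ψ(b)+1` for each `b` with
displacement vector `q`. -/
noncomputable def stageFun (q : Fin l → ℤ) : (Fin l → ℤ) → (Fin l → ℤ) := fun a =>
  if h : ∃ b, a = ev b ∧ dd T ψ b = q then od (ψ h.choose)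
  else if h2 : ∃ b, a = od (ψ b) ∧ dd T ψ b = q then ev h2.choose
  else a

section stage

variable {T} {ψ} {q : Fin l → ℤ}

lemma stageFun_ev {b : Fin l → ℤ} (hb : dd T ψ b = q) :
    stageFun T ψ q (ev b) = od (ψ b) := by
  have h : ∃ b', (ev b) = ev b' ∧ dd T ψ b' = q := ⟨b, rfl, hb⟩
  have hch : h.choose = b := ev_inj h.choose_spec.1.symm
  rw [stageFun, dif_pos h, hch]

lemma stageFun_od (hψ : Function.Injective ψ) (hl : 0 < l) {b : Fin l → ℤ}
    (hb : dd T ψ b = q) : stageFun T ψ q (od (ψ b)) = ev b := by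
  have h1 : ¬ ∃ b', (od (ψ b)) = ev b' ∧ dd T ψ b' = q := by
    rintro ⟨b', hb', -⟩
    exact ev_ne_od hl b' (ψ b) hb'.symm
  have h2 : ∃ b', (od (ψ b)) = od (ψ b') ∧ dd T ψ b' = q := ⟨b, rfl, hb⟩
  have hch : h2.choose = b := hψ (od_inj h2.choose_spec.1).symm
  rw [stageFun, dif_neg h1, dif_pos h2, hch]

lemma stageFun_id {a : Fin l → ℤ}
    (h1 : ¬ ∃ b, a = ev b ∧ dd T ψ b = q) (h2 : ¬ ∃ b, a = od (ψ b) ∧ dd T ψ b = q) :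
    stageFun T ψ q a = a := by
  rw [stageFun, dif_neg h1, dif_neg h2]

lemma stageFun_invol (hψ : Function.Injective ψ) (hl : 0 < l) :
    Function.Involutive (stageFun T ψ q) := by
  intro a
  by_cases h : ∃ b, a = ev b ∧ dd T ψ b = q
  · obtain ⟨b, rfl, hb⟩ := h
    rw [stageFun_ev hb, stageFun_od hψ hl hb]
  · by_cases h2 : ∃ b, a = od (ψ b) ∧ dd T ψ b = q
    · obtain ⟨b, rfl, hb⟩ := h2
      rw [stageFun_od hψ hl hb, stageFun_ev hb]
    · rw [stageFun_id h h2, stageFun_id h h2]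

lemma stageFun_bijective (hψ : Function.Injective ψ) (hl : 0 < l) :
    Function.Bijective (stageFun T ψ q) :=
  (stageFun_invol hψ hl).bijective

/-- For `b` with displacement `q`, the starting point and the parked point lie
in the same `q`-offset tile. -/
lemma tq_park_eq {T : ℤ} {ψ : (Fin l → ℤ) → (Fin l → ℤ)} {q : Fin l → ℤ} (hT : 1 ≤ T)
    (hdisp : ∀ b i, |ψ b i - b i| ≤ T) (hq : ∀ i, q i = -1 ∨ q i = 0 ∨ q i = 1)
    {b : Fin l → ℤ} (hb : dd T ψ b = q) :
    tq T q (od (ψ b)) = tq T q (ev b) := by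
  funext i
  have hz := (tq_apply_eq_iff hT (w := tq T q (ev b) i)).1 rfl
  have hcw : cc T (ψ b i) = cc T (b i) + q i := by
    have := congrFun hb i
    unfold dd at this
    omega
  obtain ⟨k1, k2⟩ := coord_key hT (hq i) (hdisp b i) hcw hz.1 hz.2
  exact (tq_apply_eq_iff hT).2 ⟨k1, k2⟩

lemma stageFun_pres {T : ℤ} {ψ : (Fin l → ℤ) → (Fin l → ℤ)} {q : Fin l → ℤ} (hT : 1 ≤ T)
    (hψ : Function.Injective ψ) (hl : 0 < l)
    (hdisp : ∀ b i, |ψ b i - b i| ≤ T) (hq : ∀ i, q i = -1 ∨ q i = 0 ∨ q i = 1)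
    (a : Fin l → ℤ) : tq T q (stageFun T ψ q a) = tq T q a := by
  by_cases h : ∃ b, a = ev b ∧ dd T ψ b = q
  · obtain ⟨b, rfl, hb⟩ := h
    rw [stageFun_ev hb, tq_park_eq hT hdisp hq hb]
  · by_cases h2 : ∃ b, a = od (ψ b) ∧ dd T ψ b = q
    · obtain ⟨b, rfl, hb⟩ := h2
      rw [stageFun_od hψ hl hb, ← tq_park_eq hT hdisp hq hb]
    · rw [stageFun_id h h2]

end stage

/-! ### Extension of partial injections to tile-preserving bijections -/

lemma exists_bijOn_extend {α : Type*} {S A : Set α} (hS : S.Finite) (hA : A ⊆ S)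
    {u : α → α} (hmaps : Set.MapsTo u A S) (hinj : Set.InjOn u A) :
    ∃ g : α → α, Set.BijOn g S S ∧ Set.EqOn g u A := by
  classical
  set B := u '' A with hB
  have hBS : B ⊆ S := hmaps.image_subset
  have hAfin : A.Finite := hS.subset hA
  have hcard : (S \ A).ncard = (S \ B).ncard := by
    rw [Set.ncard_diff hA hAfin, Set.ncard_diff hBS (hS.subset hBS), hB, Set.ncard_image_of_injOn hinj]
  haveI iSA : Fintype (S \ A : Set α) := (hS.subset Set.diff_subset).fintype
  haveI iSB : Fintype (S \ B : Set α) := (hS.subset Set.diff_subset).fintype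
  have hne : Nonempty ((S \ A : Set α) ≃ (S \ B : Set α)) := by
    apply Fintype.card_eq.mp
    rw [← Nat.card_eq_fintype_card, ← Nat.card_eq_fintype_card,
      Nat.card_coe_set_eq, Nat.card_coe_set_eq, hcard]
  obtain ⟨e⟩ := hne
  refine ⟨fun a => if h : a ∈ A then u a else if h2 : a ∈ S \ A then (e ⟨a, h2⟩ : α) else a,
    ⟨?_, ?_, ?_⟩, ?_⟩
  · intro a ha
    by_cases h : a ∈ A
    · simpa [h] using hmaps h
    · have h2 : a ∈ S \ A := ⟨ha, h⟩
      simp only [dif_neg h, dif_pos h2]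
      exact ((e ⟨a, h2⟩).2).1
  · intro a ha a' ha' hgg
    by_cases h : a ∈ A <;> by_cases h' : a' ∈ A
    · simp only [dif_pos h, dif_pos h'] at hgg
      exact hinj h h' hgg
    · have h2' : a' ∈ S \ A := ⟨ha', h'⟩
      simp only [dif_pos h, dif_neg h', dif_pos h2'] at hgg
      exact absurd (hgg ▸ Set.mem_image_of_mem u h) ((e ⟨a', h2'⟩).2).2
    · have h2 : a ∈ S \ A := ⟨ha, h⟩
      simp only [dif_neg h, dif_pos h2, dif_pos h'] at hgg
      exact absurd (hgg ▸ Set.mem_image_of_mem u h') ((e ⟨a, h2⟩).2).2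
    · have h2 : a ∈ S \ A := ⟨ha, h⟩
      have h2' : a' ∈ S \ A := ⟨ha', h'⟩
      simp only [dif_neg h, dif_pos h2, dif_neg h', dif_pos h2'] at hgg
      have : (⟨a, h2⟩ : (S \ A : Set α)) = ⟨a', h2'⟩ := e.injective (Subtype.ext hgg)
      exact congrArg Subtype.val this
  · intro y hy
    by_cases hyB : y ∈ B
    · obtain ⟨a, haA, rfl⟩ := hyB
      exact ⟨a, hA haA, by simp [haA]⟩
    · have hy2 : y ∈ S \ B := ⟨hy, hyB⟩
      refine ⟨(e.symm ⟨y, hy2⟩ : α), (e.symm ⟨y, hy2⟩).2.1, ?_⟩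
      have hnA : (e.symm ⟨y, hy2⟩ : α) ∉ A := (e.symm ⟨y, hy2⟩).2.2
      have h2 : (e.symm ⟨y, hy2⟩ : α) ∈ S \ A := (e.symm ⟨y, hy2⟩).2
      simp only [dif_neg hnA, dif_pos h2]
      rw [show (⟨(e.symm ⟨y, hy2⟩ : α), h2⟩ : (S \ A : Set α)) = e.symm ⟨y, hy2⟩ from
        Subtype.ext rfl, Equiv.apply_symm_apply]
  · intro a ha
    simp [ha]

lemma exists_extension {α β : Type*} (t : α → β) (hfin : ∀ z, {a | t a = z}.Finite)
    (u : α → α) (D : Set α) (hinj : Set.InjOn u D) (hpres : ∀ a ∈ D, t (u a) = t a) :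
    ∃ g : α → α, Function.Bijective g ∧ (∀ a, t (g a) = t a) ∧ Set.EqOn g u D := by
  have per : ∀ z, ∃ g, Set.BijOn g {a | t a = z} {a | t a = z} ∧
      Set.EqOn g u (D ∩ {a | t a = z}) := by
    intro z
    refine exists_bijOn_extend (hfin z) Set.inter_subset_right ?_
      (hinj.mono Set.inter_subset_left)
    rintro a ⟨haD, haz⟩
    show t (u a) = z
    rw [hpres a haD]
    exact haz
  choose G hG1 hG2 using per
  have tpres : ∀ a, t (G (t a) a) = t a := fun a => (hG1 (t a)).mapsTo rfl
  refine ⟨fun a => G (t a) a, ⟨?_, ?_⟩, tpres, ?_⟩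
  · intro a a' hgg
    simp only at hgg
    have hta : t a = t a' := by
      have h1 := tpres a
      rw [hgg, tpres a'] at h1
      exact h1.symm
    rw [hta] at hgg
    exact (hG1 (t a')).injOn hta rfl hgg
  · intro y
    obtain ⟨a, haz, hay⟩ := (hG1 (t y)).surjOn (show y ∈ {a | t a = t y} from rfl)
    refine ⟨a, ?_⟩
    simp only
    rw [show t a = t y from haz]
    exact hay
  · intro a ha
    exact hG2 (t a) ⟨ha, rfl⟩

/-! ### The last stage -/

open Classical in
noncomputable def lastPartial : (Fin l → ℤ) → (Fin l → ℤ) := fun a =>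
  if h : ∃ b, a = ev b then ev (ψ h.choose)
  else if h2 : ∃ b, a = od b then ev h2.choose
  else a

lemma exists_last {T : ℤ} {ψ : (Fin l → ℤ) → (Fin l → ℤ)} (hT : 1 ≤ T)
    (hψ : Function.Bijective ψ) (hl : 0 < l)
    (hdisp : ∀ b i, |ψ b i - b i| ≤ T) :
    ∃ g : (Fin l → ℤ) → (Fin l → ℤ), Function.Bijective g ∧
      (∀ a, tq T 0 (g a) = tq T 0 a) ∧
      (∀ b, dd T ψ b = 0 → g (ev b) = ev (ψ b)) ∧
      (∀ b, dd T ψ b ≠ 0 → g (od (ψ b)) = ev (ψ b)) := by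
  classical
  set D : Set (Fin l → ℤ) :=
    {a | (∃ b, a = ev b ∧ dd T ψ b = 0) ∨ ∃ b, a = od (ψ b) ∧ dd T ψ b ≠ 0} with hD
  have hev : ∀ b, lastPartial ψ (ev b) = ev (ψ b) := by
    intro b
    have h : ∃ b', (ev b) = ev b' := ⟨b, rfl⟩
    have hch : h.choose = b := ev_inj h.choose_spec.symm
    rw [lastPartial, dif_pos h, hch]
  have hod : ∀ m, lastPartial ψ (od m) = ev m := by
    intro m
    have h1 : ¬ ∃ b', (od m) = ev b' := by
      rintro ⟨b', hb'⟩
      exact ev_ne_od hl b' m hb'.symm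
    have h2 : ∃ m', (od m) = od m' := ⟨m, rfl⟩
    have hch : h2.choose = m := od_inj h2.choose_spec.symm
    rw [lastPartial, dif_neg h1, dif_pos h2, hch]
  have hinj : Set.InjOn (lastPartial ψ) D := by
    rintro a (⟨b, rfl, hb0⟩ | ⟨b, rfl, hb0⟩) a' (⟨b', rfl, hb0'⟩ | ⟨b', rfl, hb0'⟩) h
    · rw [hev, hev] at h
      rw [hψ.1 (ev_inj h)]
    · rw [hev, hod] at h
      exact absurd hb0 ((hψ.1 (ev_inj h)) ▸ hb0')
    · rw [hod, hev] at h
      exact absurd ((hψ.1 (ev_inj h)) ▸ hb0') hb0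
    · rw [hod, hod] at h
      rw [hψ.1 (ev_inj h)]
  have hpres : ∀ a ∈ D, tq T 0 (lastPartial ψ a) = tq T 0 a := by
    rintro a (⟨b, rfl, hb0⟩ | ⟨b, rfl, hb0⟩)
    · rw [hev]
      funext i
      rw [tq_ev hT, tq_ev hT]
      have := congrFun hb0 i
      simp only [dd, Pi.zero_apply] at this
      omega
    · rw [hod]
      funext i
      rw [tq_ev hT, tq_od hT]
  have hfin : ∀ z, {a : Fin l → ℤ | tq T 0 a = z}.Finite := by
    intro z
    apply Set.Finite.subset (Set.Finite.pi
      (fun i => Set.finite_Icc (6*T*z i - 2*T) (6*T*z i + 4*T - 1)))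
    intro a ha
    have hmem : ∀ i, a i ∈ Set.Icc (6*T*z i - 2*T) (6*T*z i + 4*T - 1) := by
      intro i
      have h := (tq_apply_eq_iff hT).1 (congrFun ha i)
      simp only [Pi.zero_apply, mul_zero] at h
      exact Set.mem_Icc.2 ⟨by linarith [h.1], by linarith [h.2]⟩
    exact fun i _ => hmem i
  obtain ⟨g, hbij, hpr, heq⟩ := exists_extension (tq T 0) hfin (lastPartial ψ) D hinj hpres
  refine ⟨g, hbij, hpr, ?_, ?_⟩
  · intro b hb0
    rw [heq (Or.inl ⟨b, rfl, hb0⟩), hev]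
  · intro b hb0
    rw [heq (Or.inr ⟨b, rfl, hb0⟩), hod]

/-! ### Bridge to Euclidean space -/

noncomputable def eh (a : Fin l → ℤ) : EuclideanSpace ℝ (Fin l) := WithLp.toLp 2 (fun i => (a i : ℝ) / 2)

lemma eh_inj : Function.Injective (eh (l := l)) := by
  intro a b h
  funext i
  have := congrFun (congrArg WithLp.ofLp h) i
  simp only [eh] at this
  have h2 : (a i : ℝ) = b i := by linarith
  exact_mod_cast h2

lemma eh_mem (a : Fin l → ℤ) : eh a ∈ halfLattice l := fun i => ⟨a i, rfl⟩

lemma mem_half_iff {x : EuclideanSpace ℝ (Fin l)} :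
    x ∈ halfLattice l ↔ ∃ a, x = eh a := by
  constructor
  · intro hx
    choose a ha using hx
    exact ⟨a, PiLp.ext ha⟩
  · rintro ⟨a, rfl⟩
    exact eh_mem a

lemma eh_ev_eq (b : Fin l → ℤ) : ∀ i, eh (ev b) i = (b i : ℝ) := by
  intro i
  show ((2 * b i : ℤ) : ℝ) / 2 = (b i : ℝ)
  push_cast
  ring

lemma eh_ev_mem (b : Fin l → ℤ) : eh (ev b) ∈ intLattice l :=
  fun i => ⟨b i, eh_ev_eq b i⟩

lemma mem_int_iff {x : EuclideanSpace ℝ (Fin l)} :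
    x ∈ intLattice l ↔ ∃ b, x = eh (ev b) := by
  constructor
  · intro hx
    choose b hb using hx
    exact ⟨b, PiLp.ext fun i => by rw [hb i, eh_ev_eq]⟩
  · rintro ⟨b, rfl⟩
    exact eh_ev_mem b

open Classical in
noncomputable def lift (f : (Fin l → ℤ) → Fin l → ℤ) :
    EuclideanSpace ℝ (Fin l) → EuclideanSpace ℝ (Fin l) := fun x =>
  if x ∈ halfLattice l then eh (f (fun i => round ((2:ℝ) * x i))) else x

lemma lift_eh (f : (Fin l → ℤ) → Fin l → ℤ) (a : Fin l → ℤ) : lift f (eh a) = eh (f a) := by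
  have hround : (fun i => round ((2:ℝ) * (eh a) i)) = a := by
    funext i
    show round ((2:ℝ) * ((a i : ℝ) / 2)) = a i
    rw [show (2:ℝ) * ((a i : ℝ) / 2) = (a i : ℝ) by ring, round_intCast]
  rw [lift, if_pos (eh_mem a), hround]

lemma lift_bijOn {f : (Fin l → ℤ) → Fin l → ℤ} (hf : Function.Bijective f) :
    Set.BijOn (lift f) (halfLattice l) (halfLattice l) := by
  refine ⟨?_, ?_, ?_⟩
  · intro x hx
    obtain ⟨a, rfl⟩ := mem_half_iff.1 hx
    rw [lift_eh]
    exact eh_mem _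
  · intro x hx x' hx' h
    obtain ⟨a, rfl⟩ := mem_half_iff.1 hx
    obtain ⟨a', rfl⟩ := mem_half_iff.1 hx'
    rw [lift_eh, lift_eh] at h
    rw [hf.1 (eh_inj h)]
  · intro y hy
    obtain ⟨c, rfl⟩ := mem_half_iff.1 hy
    obtain ⟨a, rfl⟩ := hf.2 c
    exact ⟨eh a, eh_mem a, lift_eh f a⟩

lemma eh_mem_tile_iff {T : ℕ} (hT : 1 ≤ T) {q z a : Fin l → ℤ} :
    eh a ∈ tile l T z (fun i => (q i : ℝ)) ↔ tq (T : ℤ) q a = z := by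
  have hTZ : (1:ℤ) ≤ (T:ℤ) := by exact_mod_cast hT
  rw [show (tq (T:ℤ) q a = z) ↔ ∀ i, tq (T:ℤ) q a i = z i from funext_iff]
  unfold tile
  simp only [Set.mem_setOf_eq]
  apply forall_congr'
  intro i
  rw [tq_apply_eq_iff hTZ]
  show -(1/4 : ℝ) - (T:ℕ) + (T:ℕ) * (3 * (z i : ℝ) + (q i : ℝ)) ≤ ((a i : ℝ)/2) ∧
      ((a i : ℝ)/2) ≤ -(1/4 : ℝ) + 2 * (T:ℕ) + (T:ℕ) * (3 * (z i :ℝ) + (q i : ℝ)) ↔ _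
  constructor
  · rintro ⟨hlo, hhi⟩
    constructor
    · have h1 : ((6 * (T:ℤ) * z i + 2 * (T:ℤ) * q i - 2 * (T:ℤ) : ℤ) : ℝ) < (a i : ℝ) + 1 := by
        push_cast
        push_cast at hlo
        linarith
      have h2 : 6 * (T:ℤ) * z i + 2 * (T:ℤ) * q i - 2 * (T:ℤ) < a i + 1 := by exact_mod_cast h1
      omega
    · have h1 : (a i : ℝ) < ((6 * (T:ℤ) * z i + 2 * (T:ℤ) * q i + 4 * (T:ℤ) : ℤ) : ℝ) := by
        push_cast
        push_cast at hhi
        linarith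
      have h2 : a i < 6 * (T:ℤ) * z i + 2 * (T:ℤ) * q i + 4 * (T:ℤ) := by exact_mod_cast h1
      omega
  · rintro ⟨hlo, hhi⟩
    have h1 : ((6 * (T:ℤ) * z i + 2 * (T:ℤ) * q i - 2 * (T:ℤ) : ℤ) : ℝ) ≤ (a i : ℝ) := by
      exact_mod_cast hlo
    have h2 : (a i : ℝ) ≤ ((6 * (T:ℤ) * z i + 2 * (T:ℤ) * q i + 4 * (T:ℤ) - 1 : ℤ) : ℝ) := by
      exact_mod_cast hhi
    push_cast at h1 h2
    constructor <;> linarith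

lemma lift_tile_bijOn {T : ℕ} (hT : 1 ≤ T) {f : (Fin l → ℤ) → Fin l → ℤ} {q : Fin l → ℤ}
    (hf : Function.Bijective f) (hpres : ∀ a, tq (T:ℤ) q (f a) = tq (T:ℤ) q a)
    (z : Fin l → ℤ) :
    Set.BijOn (lift f) (halfLattice l ∩ tile l T z (fun i => (q i : ℝ)))
      (halfLattice l ∩ tile l T z (fun i => (q i : ℝ))) := by
  refine ⟨?_, ?_, ?_⟩
  · rintro x ⟨hx, hxt⟩
    obtain ⟨a, rfl⟩ := mem_half_iff.1 hx
    rw [lift_eh]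
    refine ⟨eh_mem _, eh_mem_tile_iff hT |>.2 ?_⟩
    rw [hpres a]
    exact (eh_mem_tile_iff hT).1 hxt
  · intro x hx x' hx' h
    obtain ⟨a, rfl⟩ := mem_half_iff.1 hx.1
    obtain ⟨a', rfl⟩ := mem_half_iff.1 hx'.1
    rw [lift_eh, lift_eh] at h
    rw [hf.1 (eh_inj h)]
  · rintro y ⟨hy, hyt⟩
    obtain ⟨c, rfl⟩ := mem_half_iff.1 hy
    obtain ⟨a, rfl⟩ := hf.2 c
    refine ⟨eh a, ⟨eh_mem a, ?_⟩, lift_eh f a⟩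
    rw [eh_mem_tile_iff hT, ← hpres a]
    exact (eh_mem_tile_iff hT).1 hyt

/-! ### Folding helpers -/

lemma foldl_comp {α : Type*} : ∀ (L : List (α → α)) (g : α → α) (x : α),
    (L.foldl (fun g h => h ∘ g) g) x = L.foldl (fun y f => f y) (g x)
  | [], g, x => rfl
  | f :: L, g, x => by
    rw [List.foldl_cons, List.foldl_cons]
    exact foldl_comp L (f ∘ g) x

lemma foldl_eval {α : Type*} : ∀ (N : ℕ) (σ : Fin N → α → α) (Pos : ℕ → α),
    (∀ k : Fin N, σ k (Pos k.val) = Pos (k.val + 1)) →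
    (List.ofFn σ).foldl (fun y f => f y) (Pos 0) = Pos N
  | 0, σ, Pos, h => by simp
  | N + 1, σ, Pos, h => by
    have h0 := h 0
    simp only [Fin.val_zero, zero_add] at h0
    rw [List.ofFn_succ, List.foldl_cons, h0]
    exact foldl_eval N (fun i => σ i.succ) (fun k => Pos (k + 1))
      (fun k => by simpa using h k.succ)

/-- coordinates are bounded by the Euclidean norm -/
lemma coord_le_norm (v : EuclideanSpace ℝ (Fin l)) (i : Fin l) : |v i| ≤ ‖v‖ := by
  rw [EuclideanSpace.norm_eq]
  have h1 : |v i| = Real.sqrt (‖v i‖ ^ 2) := by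
    rw [Real.sqrt_sq_eq_abs]
    simp
  rw [h1]
  apply Real.sqrt_le_sqrt
  exact Finset.single_le_sum (f := fun j => ‖v j‖ ^ 2) (fun j _ => by positivity)
    (Finset.mem_univ i)

end Stmt10

theorem stmt_10 (l T : ℕ) (hl : 1 ≤ l) (hT : 1 ≤ T)
    (φ : EuclideanSpace ℝ (Fin l) → EuclideanSpace ℝ (Fin l))
    (hφbij : Set.BijOn φ (intLattice l) (intLattice l))
    (hφT : ∀ x ∈ intLattice l, ‖φ x - x‖ ≤ T) :
    ∃ σs : Fin (3 ^ l) → EuclideanSpace ℝ (Fin l) → EuclideanSpace ℝ (Fin l),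
      (∀ k, Set.BijOn (σs k) (halfLattice l) (halfLattice l)) ∧
      (∀ k : Fin (3 ^ l), ∃ p : Fin l → ℝ,
        (∀ i, p i = -1 ∨ p i = 0 ∨ p i = 1) ∧
        ∀ z : Fin l → ℤ,
          Set.BijOn (σs k) (halfLattice l ∩ tile l T z p) (halfLattice l ∩ tile l T z p)) ∧
      (∀ x ∈ intLattice l,
        φ x = (List.ofFn σs).foldl (fun g h => h ∘ g) id x) := by
  classical
  open Stmt10 in
  have hl0 : 0 < l := hl
  have hTZ : (1:ℤ) ≤ (T:ℤ) := by exact_mod_cast hT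
  have hN : 0 < 3 ^ l := pow_pos (by norm_num) l
  -- the permutation of ℤ^l induced by φ
  have hex : ∀ b : Fin l → ℤ, ∃ c, eh (ev c) = φ (eh (ev b)) := by
    intro b
    obtain ⟨c, hc⟩ := mem_int_iff.1 (hφbij.mapsTo (eh_ev_mem b))
    exact ⟨c, hc.symm⟩
  choose ψ hψ using hex
  have hψbij : Function.Bijective ψ := by
    constructor
    · intro b b' h
      have : φ (eh (ev b)) = φ (eh (ev b')) := by rw [← hψ, ← hψ, h]
      have h2 := hφbij.injOn (eh_ev_mem b) (eh_ev_mem b') this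
      exact ev_inj (eh_inj h2)
    · intro c
      obtain ⟨x, hx, hxc⟩ := hφbij.surjOn (eh_ev_mem c)
      obtain ⟨b, rfl⟩ := mem_int_iff.1 hx
      refine ⟨b, ev_inj (eh_inj ?_)⟩
      rw [hψ b, hxc]
  have hdisp : ∀ b i, |ψ b i - b i| ≤ (T:ℤ) := by
    intro b i
    have hnorm := hφT (eh (ev b)) (eh_ev_mem b)
    have hco := coord_le_norm (φ (eh (ev b)) - eh (ev b)) i
    have hval : (φ (eh (ev b)) - eh (ev b)) i = ((ψ b i : ℝ)) - (b i : ℝ) := by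
      rw [PiLp.sub_apply, ← hψ b, eh_ev_eq, eh_ev_eq]
    rw [hval] at hco
    have hreal : |((ψ b i - b i : ℤ) : ℝ)| ≤ ((T:ℤ) : ℝ) := by
      push_cast
      linarith
    exact_mod_cast hreal
  have hddmem := fun b i => dd_mem hTZ hdisp b i
  -- enumeration of the offsets
  let E : (Fin l → Fin 3) ≃ Fin (3 ^ l) := finFunctionFinEquiv
  let P0 : Fin (3 ^ l) → (Fin l → ℤ) := fun k i => ((E.symm k i : ℕ) : ℤ) - 1
  have hP0inj : Function.Injective P0 := by
    intro k k' h
    apply E.symm.injective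
    funext i
    have h2 := congrFun h i
    simp only [P0] at h2
    exact Fin.ext (by omega)
  let klast : Fin (3 ^ l) := ⟨3 ^ l - 1, by omega⟩
  let k0 : Fin (3 ^ l) := E (fun _ => 1)
  let s : Equiv.Perm (Fin (3 ^ l)) := Equiv.swap k0 klast
  let p : Fin (3 ^ l) → (Fin l → ℤ) := fun k => P0 (s k)
  have hpinj : Function.Injective p := hP0inj.comp s.injective
  have hP0k0 : P0 k0 = 0 := by
    funext i
    simp only [P0, k0, Equiv.symm_apply_apply]
    norm_num
  have hplast : p klast = 0 := by
    simp only [p, s, Equiv.swap_apply_right]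
    exact hP0k0
  have hpvals : ∀ k i, p k i = -1 ∨ p k i = 0 ∨ p k i = 1 := by
    intro k i
    have := (E.symm (s k) i).isLt
    simp only [p, P0]
    omega
  have hpsurj : ∀ q : Fin l → ℤ, (∀ i, q i = -1 ∨ q i = 0 ∨ q i = 1) → ∃ k, p k = q := by
    intro q hq
    refine ⟨s.symm (E (fun i => ⟨(q i + 1).toNat, by rcases hq i with h|h|h <;> simp [h]⟩)), ?_⟩
    simp only [p, Equiv.apply_symm_apply, P0, Equiv.symm_apply_apply]
    funext i
    rcases hq i with h|h|h <;> simp [h]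
  have hp0 : ∀ k, p k = 0 → k = klast := by
    intro k hk
    apply hpinj
    rw [hk, hplast]
  -- stage index of each lattice point
  have hexk : ∀ b, ∃ k, p k = dd (T:ℤ) ψ b := fun b =>
    hpsurj (dd (T:ℤ) ψ b) (fun i => hddmem b i)
  choose idx hidx using hexk
  have hidx_unique : ∀ b k, p k = dd (T:ℤ) ψ b → k = idx b := by
    intro b k hk
    apply hpinj
    rw [hk, hidx]
  -- the last stage
  obtain ⟨g, hgbij, hgpres, hg1, hg2⟩ := exists_last hTZ hψbij hl0 hdisp
  -- the stages
  let fs : Fin (3 ^ l) → (Fin l → ℤ) → (Fin l → ℤ) := fun k =>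
    if k = klast then g else stageFun (T:ℤ) ψ (p k)
  have hfsbij : ∀ k, Function.Bijective (fs k) := by
    intro k
    by_cases hk : k = klast
    · simp only [fs, if_pos hk]
      exact hgbij
    · simp only [fs, if_neg hk]
      exact stageFun_bijective hψbij.1 hl0
  have hfspres : ∀ k a, tq (T:ℤ) (p k) (fs k a) = tq (T:ℤ) (p k) a := by
    intro k a
    by_cases hk : k = klast
    · simp only [fs, if_pos hk, hk, hplast]
      exact hgpres a
    · simp only [fs, if_neg hk]
      exact stageFun_pres hTZ hψbij.1 hl0 hdisp (hpvals k) a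
  refine ⟨fun k => lift (fs k), fun k => lift_bijOn (hfsbij k), ?_, ?_⟩
  · intro k
    refine ⟨fun i => ((p k i : ℤ) : ℝ), ?_, ?_⟩
    · intro i
      rcases hpvals k i with h|h|h <;> simp [h]
    · intro z
      exact lift_tile_bijOn hT (hfsbij k) (hfspres k) z
  · intro x hx
    obtain ⟨b, rfl⟩ := mem_int_iff.1 hx
    rw [foldl_comp]
    set Pos : ℕ → EuclideanSpace ℝ (Fin l) := fun k =>
      if k ≤ (idx b).val then eh (ev b) else if k ≤ 3 ^ l - 1 then eh (od (ψ b))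
      else eh (ev (ψ b)) with hPos
    have hstep : ∀ k : Fin (3 ^ l), lift (fs k) (Pos k.val) = Pos (k.val + 1) := by
      intro k
      have hkval := k.isLt
      by_cases hkl : k = klast
      · have hkv : k.val = 3 ^ l - 1 := by rw [hkl]
        by_cases h0 : dd (T:ℤ) ψ b = 0
        · have hib : idx b = klast := (hidx_unique b klast (by rw [hplast, h0])).symm
          have hiv : (idx b).val = 3 ^ l - 1 := by rw [hib]
          have hPk : Pos k.val = eh (ev b) := by
            rw [hPos]
            simp only
            rw [if_pos (by omega)]
          have hPk1 : Pos (k.val + 1) = eh (ev (ψ b)) := by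
            rw [hPos]
            simp only
            rw [if_neg (by omega), if_neg (by omega)]
          rw [hPk, hPk1, lift_eh]
          simp only [fs, if_pos hkl]
          rw [hg1 b h0]
        · have hib : idx b ≠ klast := by
            intro hc
            exact h0 (by rw [← hidx b, hc, hplast])
          have hibv : (idx b).val < 3 ^ l - 1 := by
            have h1 := (idx b).isLt
            have h2 : (idx b).val ≠ 3 ^ l - 1 := fun hc => hib (Fin.ext hc)
            omega
          have hPk : Pos k.val = eh (od (ψ b)) := by
            rw [hPos]
            simp only
            rw [if_neg (by omega), if_pos (by omega)]
          have hPk1 : Pos (k.val + 1) = eh (ev (ψ b)) := by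
            rw [hPos]
            simp only
            rw [if_neg (by omega), if_neg (by omega)]
          rw [hPk, hPk1, lift_eh]
          simp only [fs, if_pos hkl]
          rw [hg2 b h0]
      · have hkv : k.val < 3 ^ l - 1 := by
          have h2 : k.val ≠ 3 ^ l - 1 := fun hc => hkl (Fin.ext hc)
          omega
        have hfsk : fs k = stageFun (T:ℤ) ψ (p k) := by simp only [fs, if_neg hkl]
        have hne : dd (T:ℤ) ψ b ≠ p k ∨ k = idx b := by
          by_cases hk : k = idx b
          · exact Or.inr hk
          · exact Or.inl (fun hc => hk (hidx_unique b k hc.symm))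
        rcases lt_trichotomy k.val (idx b).val with hlt | heq | hgt
        · have hPk : Pos k.val = eh (ev b) := by
            rw [hPos]; simp only; rw [if_pos (by omega)]
          have hPk1 : Pos (k.val + 1) = eh (ev b) := by
            rw [hPos]; simp only; rw [if_pos (by omega)]
          have hc1 : ¬ ∃ b', ev b = ev b' ∧ dd (T:ℤ) ψ b' = p k := by
            rintro ⟨b', hb', hd'⟩
            have hbb : b' = b := ev_inj hb'.symm
            subst hbb
            exact absurd (hidx_unique b' k hd'.symm) (by intro hc; omega)
          have hc2 : ¬ ∃ b', ev b = od (ψ b') ∧ dd (T:ℤ) ψ b' = p k := by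
            rintro ⟨b', hb', -⟩
            exact ev_ne_od hl0 b (ψ b') hb'
          rw [hPk, hPk1, lift_eh, hfsk, stageFun_id hc1 hc2]
        · have hkidx : k = idx b := Fin.ext heq
          have hdb : dd (T:ℤ) ψ b = p k := by rw [hkidx, hidx]
          have hPk : Pos k.val = eh (ev b) := by
            rw [hPos]; simp only; rw [if_pos (by omega)]
          have hPk1 : Pos (k.val + 1) = eh (od (ψ b)) := by
            rw [hPos]; simp only; rw [if_neg (by omega), if_pos (by omega)]
          rw [hPk, hPk1, lift_eh, hfsk, stageFun_ev hdb]
        · have hPk : Pos k.val = eh (od (ψ b)) := by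
            rw [hPos]; simp only; rw [if_neg (by omega), if_pos (by omega)]
          have hPk1 : Pos (k.val + 1) = eh (od (ψ b)) := by
            rw [hPos]; simp only; rw [if_neg (by omega), if_pos (by omega)]
          have hc1 : ¬ ∃ b', od (ψ b) = ev b' ∧ dd (T:ℤ) ψ b' = p k := by
            rintro ⟨b', hb', -⟩
            exact ev_ne_od hl0 b' (ψ b) hb'.symm
          have hc2 : ¬ ∃ b', od (ψ b) = od (ψ b') ∧ dd (T:ℤ) ψ b' = p k := by
            rintro ⟨b', hb', hd'⟩
            have hbb : b' = b := hψbij.1 (od_inj hb'.symm)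
            subst hbb
            exact absurd (hidx_unique b' k hd'.symm) (by intro hc; omega)
          rw [hPk, hPk1, lift_eh, hfsk, stageFun_id hc1 hc2]
    have h0 : Pos 0 = eh (ev b) := by
      rw [hPos]; simp only; rw [if_pos (Nat.zero_le _)]
    have hNend : Pos (3 ^ l) = eh (ev (ψ b)) := by
      have h1 := (idx b).isLt
      rw [hPos]; simp only; rw [if_neg (by omega), if_neg (by omega)]
    calc φ (eh (ev b)) = eh (ev (ψ b)) := (hψ b).symm
      _ = Pos (3 ^ l) := hNend.symm
      _ = List.foldl (fun y f => f y) (Pos 0) (List.ofFn fun k => lift (fs k)) :=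
          (foldl_eval (3 ^ l) (fun k => lift (fs k)) Pos hstep).symm
      _ = _ := by rw [h0]; rfl
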